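/- Let F be a nilpotent endomorphism of V with Jordan type the partition p_1^{r_1}⋯p_s^{r_s}, let F^t be its 'transpose' (the shift to the right in a Jordan basis, so that F F^t and F^t F are idempotents with FF^t = 1 - 1_{ker F^t} and F^t F = 1 - 1_{ker F}). For ℓ ∈ ℤ_{≥0} define φ_ℓ : End(V) → End(V) by φ_ℓ(A) = ∑_{i=0}^{ℓ} F^i (F^t)^ℓ A (F^t)^ℓ F^{ℓ−i}. Then for every A ∈ Hom(V_+, V_−) (where V_+ = ker F^t and V_− = ker F, viewed as the subspace 1_{V_−}·End(V)·1_{V_+} of End(V)), the endomorphism φ_ℓ(A) commutes with F. -/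

import Mathlib

/-- A "box" of the pyramid attached to the partition `p₁^{r₁} ⋯ p_s^{r_s}`. The last
coordinate is the position of the box in its row, counted from the right
(`0` = rightmost box). -/
abbrev PyramidBox {s : ℕ} (p r : Fin s → ℕ) : Type := (i : Fin s) × (Fin (r i) × Fin (p i))

/-- Let `F` be the nilpotent "left shift" of a pyramid and `Ft = Fᵗ` the
"right shift", with `V₊ = ker Fᵗ` (rightmost boxes, projection `Pplus`) and
`V₋ = ker F` (leftmost boxes, projection `Pminus`), so that `F * Ft = 1 - Pplus` and
`Ft * F = 1 - Pminus`.  For `φ_ℓ(A) = ∑_{i=0}^{ℓ} F^i (Fᵗ)^ℓ A (Fᵗ)^ℓ F^{ℓ-i}`, if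
`A ∈ Hom(V₊, V₋)`, i.e. `A = 1_{V₋} A 1_{V₊}`, then `φ_ℓ(A)` commutes with `F`. -/
theorem stmt3 {K : Type*} [Field K] [CharZero K]
    {V : Type*} [AddCommGroup V] [Module K V]
    {s : ℕ} (p r : Fin s → ℕ)
    (b : Module.Basis (PyramidBox p r) K V)
    (F Ft Pplus Pminus : Module.End K V)
    (hF : ∀ x : PyramidBox p r,
      F (b x) = if h : (x.2.2 : ℕ) + 1 < p x.1
        then b ⟨x.1, x.2.1, ⟨(x.2.2 : ℕ) + 1, h⟩⟩ else 0)
    (hFt : ∀ x : PyramidBox p r,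
      Ft (b x) = if 0 < (x.2.2 : ℕ)
        then b ⟨x.1, x.2.1, ⟨(x.2.2 : ℕ) - 1, Nat.lt_of_le_of_lt (Nat.sub_le _ _) x.2.2.isLt⟩⟩
        else 0)
    (hPplus : ∀ x : PyramidBox p r, Pplus (b x) = if (x.2.2 : ℕ) = 0 then b x else 0)
    (hPminus : ∀ x : PyramidBox p r, Pminus (b x) = if (x.2.2 : ℕ) + 1 = p x.1 then b x else 0)
    (ℓ : ℕ) (A : Module.End K V) (hA : Pminus * A * Pplus = A) :
    Commute F (∑ i ∈ Finset.range (ℓ + 1), F ^ i * Ft ^ ℓ * A * Ft ^ ℓ * F ^ (ℓ - i)) := by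

  -- power formulas on basis vectors
  have hFpow : ∀ (k : ℕ) (x : PyramidBox p r),
      (F ^ k) (b x) = if h : (x.2.2 : ℕ) + k < p x.1
        then b ⟨x.1, x.2.1, ⟨(x.2.2 : ℕ) + k, h⟩⟩ else 0 := by
    intro k
    induction k with
    | zero =>
      rintro ⟨i, j, m⟩
      simp [m.isLt]
    | succ k ih =>
      rintro ⟨i, j, m⟩
      rw [pow_succ', Module.End.mul_apply, ih ⟨i, j, m⟩]
      by_cases h1 : (m : ℕ) + k < p i
      · rw [dif_pos h1, hF ⟨i, j, ⟨(m : ℕ) + k, h1⟩⟩]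
        by_cases h2 : (m : ℕ) + k + 1 < p i
        · rw [dif_pos h2, dif_pos (by omega : (m : ℕ) + (k + 1) < p i)]
          have : (m : ℕ) + k + 1 = (m : ℕ) + (k + 1) := by omega
          simp only [this]
        · rw [dif_neg h2, dif_neg (by omega : ¬ ((m : ℕ) + (k + 1) < p i))]
      · rw [dif_neg h1, map_zero, dif_neg (by omega : ¬ ((m : ℕ) + (k + 1) < p i))]
  have hFtpow : ∀ (k : ℕ) (x : PyramidBox p r),
      (Ft ^ k) (b x) = if k ≤ (x.2.2 : ℕ)
        then b ⟨x.1, x.2.1, ⟨(x.2.2 : ℕ) - k,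
          Nat.lt_of_le_of_lt (Nat.sub_le _ _) x.2.2.isLt⟩⟩ else 0 := by
    intro k
    induction k with
    | zero =>
      rintro ⟨i, j, m⟩
      simp
    | succ k ih =>
      rintro ⟨i, j, m⟩
      rw [pow_succ', Module.End.mul_apply, ih ⟨i, j, m⟩]
      by_cases h1 : k ≤ (m : ℕ)
      · rw [if_pos h1, hFt ⟨i, j, ⟨(m : ℕ) - k, _⟩⟩]
        by_cases h2 : 0 < (m : ℕ) - k
        · rw [if_pos h2, if_pos (by omega : k + 1 ≤ (m : ℕ))]
          have : (m : ℕ) - k - 1 = (m : ℕ) - (k + 1) := by omega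
          simp only [this]
        · rw [if_neg h2, if_neg (by omega : ¬ (k + 1 ≤ (m : ℕ)))]
      · rw [if_neg h1, map_zero, if_neg (by omega : ¬ (k + 1 ≤ (m : ℕ)))]
  -- key vanishing lemmas
  have key1 : F ^ (ℓ + 1) * Ft ^ ℓ * Pminus = 0 := by
    refine Module.Basis.ext b fun x => ?_
    rcases x with ⟨i, j, m⟩
    rw [Module.End.mul_apply, Module.End.mul_apply, hPminus ⟨i, j, m⟩]
    by_cases h1 : (m : ℕ) + 1 = p i
    · rw [if_pos h1, hFtpow ℓ ⟨i, j, m⟩]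
      by_cases h2 : ℓ ≤ (m : ℕ)
      · rw [if_pos h2, hFpow (ℓ + 1) ⟨i, j, ⟨(m : ℕ) - ℓ, _⟩⟩]
        rw [dif_neg (by simp only; omega)]
        simp
      · rw [if_neg h2, map_zero]
        simp
    · rw [if_neg h1, map_zero, map_zero]
      simp
  have key2 : Pplus * Ft ^ ℓ * F ^ (ℓ + 1) = 0 := by
    refine Module.Basis.ext b fun x => ?_
    rcases x with ⟨i, j, m⟩
    rw [Module.End.mul_apply, Module.End.mul_apply, hFpow (ℓ + 1) ⟨i, j, m⟩]
    by_cases h1 : (m : ℕ) + (ℓ + 1) < p i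
    · rw [dif_pos h1, hFtpow ℓ ⟨i, j, ⟨(m : ℕ) + (ℓ + 1), h1⟩⟩]
      rw [if_pos (by simp only; omega)]
      rw [hPplus ⟨i, j, ⟨(m : ℕ) + (ℓ + 1) - ℓ, _⟩⟩]
      rw [if_neg (by simp only; omega)]
      simp
    · rw [dif_neg h1, map_zero, map_zero]
      simp
  -- the two boundary terms vanish
  have hg1 : F ^ (ℓ + 1) * Ft ^ ℓ * A * Ft ^ ℓ = 0 := by
    conv_lhs => rw [← hA]
    calc F ^ (ℓ + 1) * Ft ^ ℓ * (Pminus * A * Pplus) * Ft ^ ℓ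
        = (F ^ (ℓ + 1) * Ft ^ ℓ * Pminus) * (A * Pplus * Ft ^ ℓ) := by
          simp only [mul_assoc]
      _ = 0 := by rw [key1, zero_mul]
  have hg0 : Ft ^ ℓ * A * Ft ^ ℓ * F ^ (ℓ + 1) = 0 := by
    conv_lhs => rw [← hA]
    calc Ft ^ ℓ * (Pminus * A * Pplus) * Ft ^ ℓ * F ^ (ℓ + 1)
        = (Ft ^ ℓ * Pminus * A) * (Pplus * Ft ^ ℓ * F ^ (ℓ + 1)) := by
          simp only [mul_assoc]
      _ = 0 := by rw [key2, mul_zero]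
  -- main computation
  set g : ℕ → Module.End K V :=
    fun i => F ^ i * Ft ^ ℓ * A * Ft ^ ℓ * F ^ (ℓ + 1 - i) with hg
  rw [commute_iff_eq, Finset.mul_sum, Finset.sum_mul]
  have hL : ∀ i ∈ Finset.range (ℓ + 1),
      F * (F ^ i * Ft ^ ℓ * A * Ft ^ ℓ * F ^ (ℓ - i)) = g (i + 1) := by
    intro i hi
    simp only [Finset.mem_range] at hi
    rw [hg]
    simp only
    rw [show ℓ + 1 - (i + 1) = ℓ - i from by omega, pow_succ' F i]
    simp only [mul_assoc]
  have hR : ∀ i ∈ Finset.range (ℓ + 1),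
      (F ^ i * Ft ^ ℓ * A * Ft ^ ℓ * F ^ (ℓ - i)) * F = g i := by
    intro i hi
    simp only [Finset.mem_range] at hi
    rw [hg]
    simp only
    rw [show ℓ + 1 - i = (ℓ - i) + 1 from by omega, pow_succ F (ℓ - i)]
    simp only [mul_assoc]
  rw [Finset.sum_congr rfl hL, Finset.sum_congr rfl hR]
  have h' := Finset.sum_range_succ' g (ℓ + 1)
  rw [Finset.sum_range_succ g (ℓ + 1)] at h'
  have h0 : g 0 = 0 := by
    rw [hg]; simp only [pow_zero, one_mul, Nat.sub_zero]; exact hg0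
  have h1 : g (ℓ + 1) = 0 := by
    rw [hg]; simp only [Nat.sub_self, pow_zero, mul_one]; exact hg1
  rw [h0, h1, add_zero, add_zero] at h'
  exact h'.symm
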